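/- If (Z_n) is c.i.d. and T_1 < T_2 < ... are finite predictable stopping times for the natural filtration of (Z_n), then the sampled sequence (Z_{T_n})_{n≥1} is c.i.d. -/

import Mathlib

open MeasureTheory Filter
open Topology

/-- Condition (5): `(Z n)` (indexed from 1) is c.i.d. (with respect to its natural
filtration), i.e. `[Z 1, …, Z n, Z (n+2)] ∼ [Z 1, …, Z n, Z (n+1)]` for all `n ≥ 0`. -/
def IsCIDnat {Ω E : Type*} {mΩ : MeasurableSpace Ω} [MeasurableSpace E]
    (μ : Measure Ω) (Z : ℕ → Ω → E) : Prop :=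
  ∀ n : ℕ,
    Measure.map (fun ω (i : Fin (n + 1)) =>
        if (i : ℕ) < n then Z ((i : ℕ) + 1) ω else Z (n + 2) ω) μ
      = Measure.map (fun ω (i : Fin (n + 1)) => Z ((i : ℕ) + 1) ω) μ

namespace Stmt4Aux

variable {Ω E : Type*} {mΩ : MeasurableSpace Ω} [MeasurableSpace E]

lemma measurable_comp_nat {Z : ℕ → Ω → E} (hZ : ∀ n, Measurable (Z n))
    {g : Ω → ℕ} (hg : Measurable g) : Measurable (fun ω => Z (g ω) ω) := by
  have h : Measurable (fun p : Ω × ℕ => Z p.2 p.1) :=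
    measurable_from_prod_countable_left fun n => hZ n
  exact h.comp (measurable_id.prodMk hg)

lemma st_le {𝒢 : Filtration ℕ mΩ} {σ : Ω → ℕ} (hσ : IsStoppingTime 𝒢 (fun ω => (σ ω : WithTop ℕ)))
    (n : ℕ) : MeasurableSet[𝒢 n] {ω | σ ω ≤ n} := by
  have := hσ n
  convert this using 1
  ext ω
  simp

lemma st_eq {𝒢 : Filtration ℕ mΩ} {σ : Ω → ℕ} (hσ : IsStoppingTime 𝒢 (fun ω => (σ ω : WithTop ℕ)))
    (n : ℕ) : MeasurableSet[𝒢 n] {ω | σ ω = n} := by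
  have := hσ.measurableSet_eq n
  convert this using 1
  ext ω
  simp

lemma of_nat_st {𝒢 : Filtration ℕ mΩ} {σ : Ω → ℕ} (h : ∀ n, MeasurableSet[𝒢 n] {ω | σ ω ≤ n}) :
    IsStoppingTime 𝒢 (fun ω => (σ ω : WithTop ℕ)) := by
  intro n
  convert h n using 1
  ext ω
  simp

lemma min_st {𝒢 : Filtration ℕ mΩ} {σ σ' : Ω → ℕ}
    (hσ : IsStoppingTime 𝒢 (fun ω => (σ ω : WithTop ℕ)))
    (hσ' : IsStoppingTime 𝒢 (fun ω => (σ' ω : WithTop ℕ))) :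
    IsStoppingTime 𝒢 (fun ω => ((min (σ ω) (σ' ω) : ℕ) : WithTop ℕ)) := by
  refine of_nat_st fun n => ?_
  have := (st_le hσ n).union (st_le hσ' n)
  convert this using 1
  ext ω
  simp [min_le_iff]

lemma meas_st {𝒢 : Filtration ℕ mΩ} {σ : Ω → ℕ} (hσ : IsStoppingTime 𝒢 (fun ω => (σ ω : WithTop ℕ))) :
    Measurable σ := by
  refine measurable_to_countable' fun n => ?_
  exact 𝒢.le n _ (st_eq hσ n)

lemma meas_G {Z : ℕ → Ω → E} (hZ : ∀ n, Measurable (Z n)) (k m : ℕ) :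
    Measurable (fun ω (i : Fin (k + 1)) => if (i : ℕ) < k then Z ((i : ℕ) + 1) ω else Z m ω) := by
  refine measurable_pi_lambda _ fun i => ?_
  by_cases h : (i : ℕ) < k <;> simp only [h, if_true, if_false] <;> exact hZ _

lemma lawEq (μ : Measure Ω) (Z : ℕ → Ω → E) (hZ : ∀ n, Measurable (Z n))
    (hcid : IsCIDnat μ Z) (k : ℕ) :
    ∀ m, k + 1 ≤ m →
      Measure.map (fun ω (i : Fin (k + 1)) => if (i : ℕ) < k then Z ((i : ℕ) + 1) ω else Z m ω) μ
        = Measure.map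
            (fun ω (i : Fin (k + 1)) => if (i : ℕ) < k then Z ((i : ℕ) + 1) ω else Z (k + 1) ω)
            μ := by
  intro m hm
  induction m, hm using Nat.le_induction with
  | base => rfl
  | succ m hm ih =>
    obtain ⟨l, rfl⟩ : ∃ l, m = l + 1 := ⟨m - 1, by omega⟩
    have hkl : k ≤ l := by omega
    set p : (Fin (l + 1) → E) → (Fin (k + 1) → E) := fun x i =>
      if h : (i : ℕ) < k then x ⟨i, by omega⟩ else x ⟨l, by omega⟩ with hp_def
    have hp : Measurable p := by
      refine measurable_pi_lambda _ fun i => ?_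
      by_cases h : (i : ℕ) < k <;> simp only [hp_def, h, dif_pos, dif_neg, not_false_iff] <;>
        exact measurable_pi_apply _
    have h1 : p ∘ (fun ω (i : Fin (l + 1)) => if (i : ℕ) < l then Z ((i : ℕ) + 1) ω
          else Z (l + 2) ω)
        = fun ω (i : Fin (k + 1)) => if (i : ℕ) < k then Z ((i : ℕ) + 1) ω else Z (l + 1 + 1) ω := by
      funext ω
      funext i
      by_cases h : (i : ℕ) < k
      · simp only [Function.comp_apply, hp_def, dif_pos h, if_pos h, if_pos (by omega : (i : ℕ) < l)]
      · simp only [Function.comp_apply, hp_def, dif_neg h, if_neg h, if_neg (lt_irrefl l)]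
    have h2 : p ∘ (fun ω (i : Fin (l + 1)) => Z ((i : ℕ) + 1) ω)
        = fun ω (i : Fin (k + 1)) => if (i : ℕ) < k then Z ((i : ℕ) + 1) ω else Z (l + 1) ω := by
      funext ω
      funext i
      by_cases h : (i : ℕ) < k
      · simp only [Function.comp_apply, hp_def, dif_pos h, if_pos h]
      · simp only [Function.comp_apply, hp_def, dif_neg h, if_neg h]
    have hmeasH : Measurable (fun ω (i : Fin (l + 1)) =>
        if (i : ℕ) < l then Z ((i : ℕ) + 1) ω else Z (l + 2) ω) := meas_G hZ l (l + 2)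
    have hmeasH' : Measurable (fun ω (i : Fin (l + 1)) => Z ((i : ℕ) + 1) ω) :=
      measurable_pi_lambda _ fun i => hZ _
    calc Measure.map (fun ω (i : Fin (k + 1)) =>
            if (i : ℕ) < k then Z ((i : ℕ) + 1) ω else Z (l + 1 + 1) ω) μ
        = Measure.map p (Measure.map (fun ω (i : Fin (l + 1)) =>
            if (i : ℕ) < l then Z ((i : ℕ) + 1) ω else Z (l + 2) ω) μ) := by
            rw [Measure.map_map hp hmeasH, h1]
      _ = Measure.map p (Measure.map (fun ω (i : Fin (l + 1)) => Z ((i : ℕ) + 1) ω) μ) := by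
            rw [hcid l]
      _ = Measure.map (fun ω (i : Fin (k + 1)) =>
            if (i : ℕ) < k then Z ((i : ℕ) + 1) ω else Z (l + 1) ω) μ := by
            rw [Measure.map_map hp hmeasH', h2]
      _ = _ := ih

section Chunk2
variable {Ω E : Type*} {mΩ : MeasurableSpace Ω} [MeasurableSpace E]

lemma mem_filtration (Z : ℕ → Ω → E) (𝒢 : Filtration ℕ mΩ)
    (h𝒢 : ∀ n, 𝒢 n = ⨆ i ∈ Set.Icc 1 n, MeasurableSpace.comap (Z i) inferInstance)
    (k : ℕ) {A : Set Ω} (hA : MeasurableSet[𝒢 k] A) :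
    ∃ B : Set (Fin k → E), MeasurableSet B ∧
      A = (fun ω (i : Fin k) => Z ((i : ℕ) + 1) ω) ⁻¹' B := by
  have hle : (𝒢 k : MeasurableSpace Ω) ≤
      MeasurableSpace.comap (fun ω (i : Fin k) => Z ((i : ℕ) + 1) ω) MeasurableSpace.pi := by
    rw [h𝒢 k]
    refine iSup_le fun i => iSup_le fun hi => ?_
    obtain ⟨hi1, hik⟩ := hi
    have hZi : Z i = (fun x : Fin k → E => x ⟨i - 1, by omega⟩) ∘
        (fun ω (j : Fin k) => Z ((j : ℕ) + 1) ω) := by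
      funext ω
      simp only [Function.comp_apply]
      congr 1
      omega
    rw [hZi, ← MeasurableSpace.comap_comp]
    exact MeasurableSpace.comap_mono (measurable_iff_comap_le.mp (measurable_pi_apply _))
  obtain ⟨B, hB, hBA⟩ := MeasurableSpace.measurableSet_comap.mp (hle A hA)
  exact ⟨B, hB, hBA.symm⟩

lemma key1 (μ : Measure Ω) (Z : ℕ → Ω → E) (hZ : ∀ n, Measurable (Z n))
    (hcid : IsCIDnat μ Z) (𝒢 : Filtration ℕ mΩ)
    (h𝒢 : ∀ n, 𝒢 n = ⨆ i ∈ Set.Icc 1 n, MeasurableSpace.comap (Z i) inferInstance)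
    (k m : ℕ) (hkm : k + 1 ≤ m) {A : Set Ω} (hA : MeasurableSet[𝒢 k] A)
    {Bn : Set E} (hBn : MeasurableSet Bn) :
    μ (A ∩ Z m ⁻¹' Bn) = μ (A ∩ Z (k + 1) ⁻¹' Bn) := by
  obtain ⟨B, hB, rfl⟩ := mem_filtration Z 𝒢 h𝒢 k hA
  set C : Set (Fin (k + 1) → E) :=
    {x | (fun i : Fin k => x i.castSucc) ∈ B ∧ x (Fin.last k) ∈ Bn} with hC_def
  have hC : MeasurableSet C := by
    have h1 : Measurable (fun x : Fin (k + 1) → E => fun i : Fin k => x i.castSucc) :=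
      measurable_pi_lambda _ fun i => measurable_pi_apply _
    exact (h1 hB).inter ((measurable_pi_apply (Fin.last k)) hBn)
  have hpre : ∀ m' : ℕ,
      (fun ω (i : Fin (k + 1)) => if (i : ℕ) < k then Z ((i : ℕ) + 1) ω else Z m' ω) ⁻¹' C
        = ((fun ω (i : Fin k) => Z ((i : ℕ) + 1) ω) ⁻¹' B) ∩ Z m' ⁻¹' Bn := by
    intro m'
    ext ω
    have hcs : (fun i : Fin k =>
        (fun j : Fin (k + 1) => if (j : ℕ) < k then Z ((j : ℕ) + 1) ω else Z m' ω) i.castSucc)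
        = fun i : Fin k => Z ((i : ℕ) + 1) ω := by
      funext i
      simp only [Fin.coe_castSucc, if_pos i.isLt]
    have hlast : (fun j : Fin (k + 1) => if (j : ℕ) < k then Z ((j : ℕ) + 1) ω else Z m' ω)
        (Fin.last k) = Z m' ω := by
      simp only [Fin.val_last, lt_irrefl, if_false]
    simp only [Set.mem_preimage, Set.mem_inter_iff, hC_def, Set.mem_setOf_eq, hcs, hlast]
  rw [← hpre m, ← hpre (k + 1), ← Measure.map_apply (meas_G hZ k m) hC,
    ← Measure.map_apply (meas_G hZ k (k + 1)) hC, lawEq μ Z hZ hcid k m hkm]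

end Chunk2
section Chunk3
variable {Ω E : Type*} {mΩ : MeasurableSpace Ω} [MeasurableSpace E]
variable (μ : Measure Ω) (Z : ℕ → Ω → E)

lemma step_one (hZ : ∀ n, Measurable (Z n))
    (hcid : IsCIDnat μ Z) (𝒢 : Filtration ℕ mΩ)
    (h𝒢 : ∀ n, 𝒢 n = ⨆ i ∈ Set.Icc 1 n, MeasurableSpace.comap (Z i) inferInstance)
    {σ : Ω → ℕ} (hσ : IsStoppingTime 𝒢 (fun ω => (σ ω : WithTop ℕ)))
    {A : Set Ω} (hA : ∀ s, MeasurableSet[𝒢 s] (A ∩ {ω | σ ω ≤ s}))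
    {Bn : Set E} (hBn : MeasurableSet Bn) :
    μ (A ∩ {ω | Z (σ ω + 1) ω ∈ Bn}) = μ (A ∩ {ω | Z (σ ω + 2) ω ∈ Bn}) := by
  have hAs : ∀ s, MeasurableSet[𝒢 s] (A ∩ {ω | σ ω = s}) := by
    intro s
    have h : A ∩ {ω | σ ω = s} = (A ∩ {ω | σ ω ≤ s}) ∩ {ω | σ ω = s} := by
      ext ω
      simp only [Set.mem_inter_iff, Set.mem_setOf_eq]
      constructor
      · rintro ⟨h1, h2⟩; exact ⟨⟨h1, le_of_eq h2⟩, h2⟩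
      · rintro ⟨⟨h1, _⟩, h2⟩; exact ⟨h1, h2⟩
    rw [h]
    exact (hA s).inter (st_eq hσ s)
  have decomp : ∀ c : ℕ, A ∩ {ω | Z (σ ω + c) ω ∈ Bn}
      = ⋃ s : ℕ, ((A ∩ {ω | σ ω = s}) ∩ Z (s + c) ⁻¹' Bn) := by
    intro c
    ext ω
    simp only [Set.mem_inter_iff, Set.mem_setOf_eq, Set.mem_iUnion, Set.mem_preimage]
    constructor
    · rintro ⟨h1, h2⟩; exact ⟨σ ω, ⟨h1, rfl⟩, h2⟩
    · rintro ⟨s, ⟨h1, h2⟩, h3⟩; subst h2; exact ⟨h1, h3⟩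
  have hdisj : ∀ c : ℕ, Pairwise (Function.onFun Disjoint
      fun s : ℕ => ((A ∩ {ω | σ ω = s}) ∩ Z (s + c) ⁻¹' Bn)) := by
    intro c s t hst
    refine Set.disjoint_left.mpr fun ω h1 h2 => hst ?_
    exact h1.1.2.symm.trans h2.1.2
  have hmeas : ∀ c s : ℕ, MeasurableSet ((A ∩ {ω | σ ω = s}) ∩ Z (s + c) ⁻¹' Bn) :=
    fun c s => (𝒢.le s _ (hAs s)).inter ((hZ (s + c)) hBn)
  rw [decomp 1, decomp 2, measure_iUnion (hdisj 1) (hmeas 1), measure_iUnion (hdisj 2) (hmeas 2)]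
  exact tsum_congr fun s =>
    (key1 μ Z hZ hcid 𝒢 h𝒢 s (s + 2) (by omega) (hAs s) hBn).symm

lemma add_const_st {𝒢 : Filtration ℕ mΩ} {σ : Ω → ℕ} (hσ : IsStoppingTime 𝒢 (fun ω => (σ ω : WithTop ℕ))) (r : ℕ) :
    IsStoppingTime 𝒢 (fun ω => ((σ ω + r : ℕ) : WithTop ℕ)) := by
  refine of_nat_st fun n => ?_
  by_cases hrn : r ≤ n
  · have h : {ω | σ ω + r ≤ n} = {ω | σ ω ≤ n - r} := by
      ext ω; simp only [Set.mem_setOf_eq]; omega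
    rw [h]
    exact 𝒢.mono (Nat.sub_le n r) _ (st_le hσ (n - r))
  · have h : {ω | σ ω + r ≤ n} = ∅ := by
      ext ω; simp only [Set.mem_setOf_eq, Set.mem_empty_iff_false, iff_false]; omega
    rw [h]
    exact @MeasurableSet.empty _ (𝒢 n)

end Chunk3
section Chunk4
variable {Ω E : Type*} {mΩ : MeasurableSpace Ω} [MeasurableSpace E]
variable (μ : Measure Ω) (Z : ℕ → Ω → E)

lemma bounded (hZ : ∀ n, Measurable (Z n))
    (hcid : IsCIDnat μ Z) (𝒢 : Filtration ℕ mΩ)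
    (h𝒢 : ∀ n, 𝒢 n = ⨆ i ∈ Set.Icc 1 n, MeasurableSpace.comap (Z i) inferInstance)
    {σ : Ω → ℕ} (hσ : IsStoppingTime 𝒢 (fun ω => (σ ω : WithTop ℕ)))
    {A : Set Ω} (hA : ∀ s, MeasurableSet[𝒢 s] (A ∩ {ω | σ ω ≤ s}))
    {Bn : Set E} (hBn : MeasurableSet Bn) :
    ∀ (r : ℕ) (σ' : Ω → ℕ), IsStoppingTime 𝒢 (fun ω => (σ' ω : WithTop ℕ)) → (∀ ω, σ ω ≤ σ' ω) →
      (∀ ω, σ' ω ≤ σ ω + r) →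
      μ (A ∩ {ω | Z (σ' ω + 1) ω ∈ Bn}) = μ (A ∩ {ω | Z (σ ω + 1) ω ∈ Bn}) := by
  intro r
  induction r with
  | zero =>
    intro σ' _ hlb hub
    have h : σ' = σ := funext fun ω => le_antisymm (by simpa using hub ω) (hlb ω)
    rw [h]
  | succ r ih =>
    intro σ' hσ' hlb hub
    set σ'' : Ω → ℕ := fun ω => min (σ' ω) (σ ω + r) with hσ''_def
    have hσ''st : IsStoppingTime 𝒢 (fun ω => (σ'' ω : WithTop ℕ)) := min_st hσ' (add_const_st hσ r)
    have hIH : μ (A ∩ {ω | Z (σ'' ω + 1) ω ∈ Bn}) = μ (A ∩ {ω | Z (σ ω + 1) ω ∈ Bn}) :=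
      ih σ'' hσ''st (fun ω => le_min (hlb ω) (Nat.le_add_right _ _)) (fun ω => min_le_right _ _)
    set D : Set Ω := {ω | σ ω + r < σ' ω} with hD_def
    have hσm : Measurable σ := meas_st hσ
    have hσ'm : Measurable σ' := meas_st hσ'
    have hD : MeasurableSet D := by
      have : D = {ω | ¬ σ' ω ≤ σ ω + r} := by ext ω; simp [hD_def]
      rw [this]
      exact (measurableSet_le hσ'm (hσm.add_const r)).compl
    have hidx : ∀ ω ∈ D, σ'' ω = σ ω + r ∧ σ' ω = σ ω + r + 1 := by
      intro ω hω
      have h1 : σ ω + r < σ' ω := hω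
      have h2 : σ' ω ≤ σ ω + r + 1 := hub ω
      constructor
      · simp only [hσ''_def]; omega
      · omega
    have hidx' : ∀ ω ∉ D, σ'' ω = σ' ω := by
      intro ω hω
      have h1 : ¬ σ ω + r < σ' ω := hω
      simp only [hσ''_def]; omega
    -- measurability of A ∩ D w.r.t. the σ'' stopping σ-algebra
    have hAD : ∀ s, MeasurableSet[𝒢 s] ((A ∩ D) ∩ {ω | σ'' ω ≤ s}) := by
      intro s
      have hrep : (A ∩ D) ∩ {ω | σ'' ω ≤ s}
          = ⋃ t ∈ Set.Iic s, ((A ∩ {ω | σ ω ≤ t}) ∩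
              ({ω | σ ω + r = t} ∩ {ω | ¬ σ' ω ≤ t})) := by
        ext ω
        simp only [Set.mem_inter_iff, Set.mem_setOf_eq, Set.mem_iUnion, Set.mem_Iic,
          exists_prop, hD_def, hσ''_def]
        constructor
        · rintro ⟨⟨h1, h2⟩, h3⟩
          refine ⟨σ ω + r, by omega, ⟨h1, by omega⟩, rfl, by omega⟩
        · rintro ⟨t, hts, ⟨h1, _⟩, h2, h3⟩
          exact ⟨⟨h1, by omega⟩, by omega⟩
      rw [hrep]
      refine MeasurableSet.biUnion (Set.to_countable _) fun t ht => ?_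
      refine ((𝒢.mono ht _ (hA t)).inter (MeasurableSet.inter ?_ ?_))
      · by_cases hrt : r ≤ t
        · have h : {ω | σ ω + r = t} = {ω | σ ω = t - r} := by
            ext ω; simp only [Set.mem_setOf_eq]; omega
          rw [h]
          exact 𝒢.mono (le_trans (Nat.sub_le t r) ht) _ (st_eq hσ (t - r))
        · have h : {ω | σ ω + r = t} = ∅ := by
            ext ω; simp only [Set.mem_setOf_eq, Set.mem_empty_iff_false, iff_false]; omega
          rw [h]
          exact @MeasurableSet.empty _ (𝒢 s)
      · exact (𝒢.mono ht _ (st_le hσ' t)).compl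
    have hstep := step_one μ Z hZ hcid 𝒢 h𝒢 hσ''st hAD hBn
    -- set identities
    have e1 : (A ∩ {ω | Z (σ' ω + 1) ω ∈ Bn}) ∩ D
        = (A ∩ D) ∩ {ω | Z (σ'' ω + 2) ω ∈ Bn} := by
      ext ω
      simp only [Set.mem_inter_iff, Set.mem_setOf_eq]
      constructor
      · rintro ⟨⟨h1, h2⟩, h3⟩
        obtain ⟨ha, hb⟩ := hidx ω h3
        refine ⟨⟨h1, h3⟩, ?_⟩
        rw [show σ'' ω + 2 = σ' ω + 1 by omega]
        exact h2
      · rintro ⟨⟨h1, h3⟩, h2⟩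
        obtain ⟨ha, hb⟩ := hidx ω h3
        refine ⟨⟨h1, ?_⟩, h3⟩
        rw [show σ' ω + 1 = σ'' ω + 2 by omega]
        exact h2
    have e2 : (A ∩ {ω | Z (σ' ω + 1) ω ∈ Bn}) \ D
        = ((A ∩ {ω | Z (σ'' ω + 1) ω ∈ Bn}) \ D) := by
      ext ω
      simp only [Set.mem_diff, Set.mem_inter_iff, Set.mem_setOf_eq]
      constructor
      · rintro ⟨⟨h1, h2⟩, h3⟩
        have := hidx' ω h3
        exact ⟨⟨h1, by rw [this]; exact h2⟩, h3⟩
      · rintro ⟨⟨h1, h2⟩, h3⟩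
        have := hidx' ω h3
        exact ⟨⟨h1, by rw [← this]; exact h2⟩, h3⟩
    have e3 : (A ∩ {ω | Z (σ'' ω + 1) ω ∈ Bn}) ∩ D
        = (A ∩ D) ∩ {ω | Z (σ'' ω + 1) ω ∈ Bn} := by
      ext ω
      simp only [Set.mem_inter_iff, Set.mem_setOf_eq]
      tauto
    calc μ (A ∩ {ω | Z (σ' ω + 1) ω ∈ Bn})
        = μ ((A ∩ {ω | Z (σ' ω + 1) ω ∈ Bn}) ∩ D)
          + μ ((A ∩ {ω | Z (σ' ω + 1) ω ∈ Bn}) \ D) := (measure_inter_add_diff _ hD).symm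
      _ = μ ((A ∩ D) ∩ {ω | Z (σ'' ω + 1) ω ∈ Bn})
          + μ ((A ∩ {ω | Z (σ'' ω + 1) ω ∈ Bn}) \ D) := by rw [e1, e2, ← hstep]
      _ = μ ((A ∩ {ω | Z (σ'' ω + 1) ω ∈ Bn}) ∩ D)
          + μ ((A ∩ {ω | Z (σ'' ω + 1) ω ∈ Bn}) \ D) := by rw [e3]
      _ = μ (A ∩ {ω | Z (σ'' ω + 1) ω ∈ Bn}) := measure_inter_add_diff _ hD
      _ = μ (A ∩ {ω | Z (σ ω + 1) ω ∈ Bn}) := hIH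

end Chunk4
section Chunk5
variable {Ω E : Type*} {mΩ : MeasurableSpace Ω} [MeasurableSpace E]

lemma unbounded (μ : Measure Ω) [IsProbabilityMeasure μ] (Z : ℕ → Ω → E)
    (hZ : ∀ n, Measurable (Z n))
    (hcid : IsCIDnat μ Z) (𝒢 : Filtration ℕ mΩ)
    (h𝒢 : ∀ n, 𝒢 n = ⨆ i ∈ Set.Icc 1 n, MeasurableSpace.comap (Z i) inferInstance)
    {σ σ' : Ω → ℕ} (hσ : IsStoppingTime 𝒢 (fun ω => (σ ω : WithTop ℕ))) (hσ' : IsStoppingTime 𝒢 (fun ω => (σ' ω : WithTop ℕ)))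
    (hle : ∀ ω, σ ω ≤ σ' ω)
    {A : Set Ω} (hA : ∀ s, MeasurableSet[𝒢 s] (A ∩ {ω | σ ω ≤ s}))
    {Bn : Set E} (hBn : MeasurableSet Bn) :
    μ (A ∩ {ω | Z (σ' ω + 1) ω ∈ Bn}) = μ (A ∩ {ω | Z (σ ω + 1) ω ∈ Bn}) := by
  set L := μ (A ∩ {ω | Z (σ ω + 1) ω ∈ Bn}) with hL
  set R := μ (A ∩ {ω | Z (σ' ω + 1) ω ∈ Bn}) with hR
  have hσm : Measurable σ := meas_st hσ
  have hσ'm : Measurable σ' := meas_st hσ'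
  set Er : ℕ → Set Ω := fun r => {ω | σ' ω ≤ σ ω + r} with hEr
  have hErm : ∀ r, MeasurableSet (Er r) := fun r => measurableSet_le hσ'm (hσm.add_const r)
  have hε : Tendsto (fun r => μ (Er r)ᶜ) atTop (𝓝 0) := by
    have h0 : (⋂ r, (Er r)ᶜ) = ∅ := by
      ext ω
      simp only [Set.mem_iInter, Set.mem_compl_iff, hEr, Set.mem_setOf_eq, not_le,
        Set.mem_empty_iff_false, iff_false, not_forall, not_lt]
      exact ⟨σ' ω, by omega⟩
    have ht := tendsto_measure_iInter_atTop (μ := μ)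
      (fun r => (hErm r).compl.nullMeasurableSet)
      (fun i j hij => Set.compl_subset_compl.mpr fun ω hω => by
        simp only [hEr, Set.mem_setOf_eq] at hω ⊢; omega)
      ⟨0, measure_ne_top μ _⟩
    rw [h0] at ht
    simpa [Function.comp_def] using ht
  have hσr : ∀ r : ℕ, μ (A ∩ {ω | Z (min (σ' ω) (σ ω + r) + 1) ω ∈ Bn}) = L := fun r =>
    bounded μ Z hZ hcid 𝒢 h𝒢 hσ hA hBn r (fun ω => min (σ' ω) (σ ω + r))
      (min_st hσ' (add_const_st hσ r))
      (fun ω => le_min (hle ω) (Nat.le_add_right _ _)) (fun ω => min_le_right _ _)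
  have hset : ∀ r, (A ∩ {ω | Z (min (σ' ω) (σ ω + r) + 1) ω ∈ Bn}) ∩ Er r
      = (A ∩ {ω | Z (σ' ω + 1) ω ∈ Bn}) ∩ Er r := by
    intro r
    ext ω
    simp only [Set.mem_inter_iff, Set.mem_setOf_eq, hEr]
    constructor
    · rintro ⟨⟨h1, h2⟩, h3⟩
      exact ⟨⟨h1, by rwa [min_eq_left h3] at h2⟩, h3⟩
    · rintro ⟨⟨h1, h2⟩, h3⟩
      exact ⟨⟨h1, by rwa [min_eq_left h3]⟩, h3⟩
  have hLle : ∀ r, L ≤ R + μ (Er r)ᶜ := by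
    intro r
    calc L = μ (A ∩ {ω | Z (min (σ' ω) (σ ω + r) + 1) ω ∈ Bn}) := (hσr r).symm
      _ ≤ μ ((A ∩ {ω | Z (min (σ' ω) (σ ω + r) + 1) ω ∈ Bn}) ∩ Er r)
          + μ ((A ∩ {ω | Z (min (σ' ω) (σ ω + r) + 1) ω ∈ Bn}) \ Er r) :=
        measure_le_inter_add_diff μ _ _
      _ ≤ R + μ (Er r)ᶜ := by
        refine add_le_add ?_ (measure_mono fun ω hω => hω.2)
        rw [hset r]
        exact measure_mono Set.inter_subset_left
  have hRle : ∀ r, R ≤ L + μ (Er r)ᶜ := by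
    intro r
    calc R ≤ μ ((A ∩ {ω | Z (σ' ω + 1) ω ∈ Bn}) ∩ Er r)
          + μ ((A ∩ {ω | Z (σ' ω + 1) ω ∈ Bn}) \ Er r) := measure_le_inter_add_diff μ _ _
      _ ≤ L + μ (Er r)ᶜ := by
        refine add_le_add ?_ (measure_mono fun ω hω => hω.2)
        rw [← hset r, ← hσr r]
        exact measure_mono Set.inter_subset_left
  have htR : Tendsto (fun r => R + μ (Er r)ᶜ) atTop (𝓝 R) := by
    have := Tendsto.const_add R hε
    simpa using this
  have htL : Tendsto (fun r => L + μ (Er r)ᶜ) atTop (𝓝 L) := by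
    have := Tendsto.const_add L hε
    simpa using this
  exact le_antisymm (ge_of_tendsto' htL hRle) (ge_of_tendsto' htR hLle)

end Chunk5
end Stmt4Aux

/-- If `(Z n)` is c.i.d. and `T 1 < T 2 < …` are finite predictable stopping times
(`T j = S j + 1` with `S j` a stopping time) for the natural filtration of `(Z n)`,
then the sampled sequence `(Z (T n))` is c.i.d. -/
theorem stmt4 {Ω E : Type*} {mΩ : MeasurableSpace Ω} [MeasurableSpace E]
    (μ : Measure Ω) [IsProbabilityMeasure μ] (Z : ℕ → Ω → E)
    (hZ : ∀ n, Measurable (Z n))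
    (hcid : IsCIDnat μ Z)
    (𝒢 : Filtration ℕ mΩ)
    (h𝒢 : ∀ n, 𝒢 n = ⨆ i ∈ Set.Icc 1 n, MeasurableSpace.comap (Z i) inferInstance)
    (T : ℕ → Ω → ℕ) (S : ℕ → Ω → ℕ)
    (hTS : ∀ j, 1 ≤ j → ∀ ω, T j ω = S j ω + 1)
    (hS : ∀ j, 1 ≤ j → IsStoppingTime 𝒢 (fun ω => (S j ω : WithTop ℕ)))
    (hmono : ∀ j, 1 ≤ j → ∀ ω, T j ω < T (j + 1) ω) :
    IsCIDnat μ (fun n ω => Z (T n ω) ω) := by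
  intro n
  show Measure.map (fun ω (i : Fin (n + 1)) =>
      if (i : ℕ) < n then Z (T ((i : ℕ) + 1) ω) ω else Z (T (n + 2) ω) ω) μ
    = Measure.map (fun ω (i : Fin (n + 1)) => Z (T ((i : ℕ) + 1) ω) ω) μ
  have hTm : ∀ j, 1 ≤ j → Measurable (T j) := by
    intro j hj
    have h : T j = fun ω => S j ω + 1 := funext (hTS j hj)
    rw [h]
    exact (Stmt4Aux.meas_st (hS j hj)).add_const 1
  have hW : ∀ j, 1 ≤ j → Measurable (fun ω => Z (T j ω) ω) := fun j hj =>
    Stmt4Aux.measurable_comp_nat hZ (hTm j hj)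
  have hF2 : Measurable (fun ω (i : Fin (n + 1)) =>
      if (i : ℕ) < n then Z (T ((i : ℕ) + 1) ω) ω else Z (T (n + 2) ω) ω) := by
    refine measurable_pi_lambda _ fun i => ?_
    by_cases h : (i : ℕ) < n <;> simp only [h, if_true, if_false]
    · exact hW _ (by omega)
    · exact hW _ (by omega)
  have hF1 : Measurable (fun ω (i : Fin (n + 1)) => Z (T ((i : ℕ) + 1) ω) ω) :=
    measurable_pi_lambda _ fun i => hW _ (by omega)
  have hTmono : ∀ j l, 1 ≤ j → j < l → ∀ ω, T j ω < T l ω := by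
    intro j l hj hjl
    induction l with
    | zero => omega
    | succ l ihl =>
      intro ω
      rcases Nat.lt_succ_iff_lt_or_eq.mp hjl with h | h
      · exact (ihl h ω).trans (hmono l (by omega) ω)
      · subst h; exact hmono j hj ω
  haveI : IsProbabilityMeasure (Measure.map (fun ω (i : Fin (n + 1)) =>
      if (i : ℕ) < n then Z (T ((i : ℕ) + 1) ω) ω else Z (T (n + 2) ω) ω) μ) :=
    Measure.isProbabilityMeasure_map hF2.aemeasurable
  refine ext_of_generate_finite _ generateFrom_pi.symm isPiSystem_pi ?_ ?_
  · rintro s ⟨B, hBmem, rfl⟩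
    have hB : ∀ i, MeasurableSet (B i) := fun i => hBmem i (Set.mem_univ i)
    have hBpi : MeasurableSet (Set.pi Set.univ B) := MeasurableSet.univ_pi hB
    rw [Measure.map_apply hF2 hBpi, Measure.map_apply hF1 hBpi]
    set A : Set Ω := ⋂ i : Fin n, {ω | Z (T ((i : ℕ) + 1) ω) ω ∈ B i.castSucc} with hA_def
    have key2 : ((fun ω (i : Fin (n + 1)) =>
        if (i : ℕ) < n then Z (T ((i : ℕ) + 1) ω) ω else Z (T (n + 2) ω) ω) ⁻¹'
          Set.pi Set.univ B)
        = A ∩ {ω | Z (T (n + 2) ω) ω ∈ B (Fin.last n)} := by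
      ext ω
      simp only [Set.mem_preimage, Set.mem_pi, Set.mem_univ, forall_true_left, hA_def,
        Set.mem_inter_iff, Set.mem_iInter, Set.mem_setOf_eq]
      rw [Fin.forall_fin_succ']
      constructor
      · rintro ⟨h1, h2⟩
        refine ⟨fun i => ?_, ?_⟩
        · have := h1 i
          rwa [Fin.coe_castSucc, if_pos i.isLt] at this
        · rwa [Fin.val_last, if_neg (lt_irrefl n)] at h2
      · rintro ⟨h1, h2⟩
        refine ⟨fun i => ?_, ?_⟩
        · rw [Fin.coe_castSucc, if_pos i.isLt]; exact h1 i
        · rw [Fin.val_last, if_neg (lt_irrefl n)]; exact h2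
    have key1' : ((fun ω (i : Fin (n + 1)) => Z (T ((i : ℕ) + 1) ω) ω) ⁻¹' Set.pi Set.univ B)
        = A ∩ {ω | Z (T (n + 1) ω) ω ∈ B (Fin.last n)} := by
      ext ω
      simp only [Set.mem_preimage, Set.mem_pi, Set.mem_univ, forall_true_left, hA_def,
        Set.mem_inter_iff, Set.mem_iInter, Set.mem_setOf_eq]
      rw [Fin.forall_fin_succ']
      constructor
      · rintro ⟨h1, h2⟩
        refine ⟨fun i => ?_, ?_⟩
        · have := h1 i
          rwa [Fin.coe_castSucc] at this
        · rwa [Fin.val_last] at h2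
      · rintro ⟨h1, h2⟩
        refine ⟨fun i => ?_, ?_⟩
        · rw [Fin.coe_castSucc]; exact h1 i
        · rw [Fin.val_last]; exact h2
    rw [key2, key1']
    have hσσ' : ∀ ω, S (n + 1) ω ≤ S (n + 2) ω := by
      intro ω
      have h := hmono (n + 1) (by omega) ω
      rw [hTS (n + 1) (by omega) ω, hTS (n + 1 + 1) (by omega) ω] at h
      have he : S (n + 1 + 1) ω = S (n + 2) ω := rfl
      omega
    have hTle : ∀ (i : Fin n) ω, T ((i : ℕ) + 1) ω ≤ S (n + 1) ω := by
      intro i ω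
      have h := hTmono ((i : ℕ) + 1) (n + 1) (by omega) (by have := i.isLt; omega) ω
      rw [hTS (n + 1) (by omega) ω] at h
      omega
    have hA𝒢 : ∀ s, MeasurableSet[𝒢 s] (A ∩ {ω | S (n + 1) ω ≤ s}) := by
      intro s
      have hrep : A ∩ {ω | S (n + 1) ω ≤ s}
          = (⋂ i : Fin n, ({ω | Z (T ((i : ℕ) + 1) ω) ω ∈ B i.castSucc}
              ∩ {ω | S (n + 1) ω ≤ s})) ∩ {ω | S (n + 1) ω ≤ s} := by
        ext ω
        simp only [hA_def, Set.mem_inter_iff, Set.mem_iInter, Set.mem_setOf_eq]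
        constructor
        · rintro ⟨h1, h2⟩; exact ⟨fun i => ⟨h1 i, h2⟩, h2⟩
        · rintro ⟨h1, h2⟩; exact ⟨fun i => (h1 i).1, h2⟩
      rw [hrep]
      refine MeasurableSet.inter (MeasurableSet.iInter fun i => ?_) (Stmt4Aux.st_le (hS (n + 1) (by omega)) s)
      have hrep2 : {ω | Z (T ((i : ℕ) + 1) ω) ω ∈ B i.castSucc} ∩ {ω | S (n + 1) ω ≤ s}
          = ⋃ m ∈ Set.Iic s, ({ω | T ((i : ℕ) + 1) ω = m} ∩ Z m ⁻¹' B i.castSucc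
              ∩ {ω | S (n + 1) ω ≤ s}) := by
        ext ω
        simp only [Set.mem_inter_iff, Set.mem_setOf_eq, Set.mem_iUnion, Set.mem_Iic,
          Set.mem_preimage, exists_prop]
        constructor
        · rintro ⟨h1, h2⟩
          exact ⟨T ((i : ℕ) + 1) ω, le_trans (hTle i ω) h2, ⟨rfl, h1⟩, h2⟩
        · rintro ⟨m, hms, ⟨hm1, hm2⟩, h2⟩
          exact ⟨by rwa [hm1], h2⟩
      rw [hrep2]
      refine MeasurableSet.biUnion (Set.to_countable _) fun m hm => ?_
      have hms : m ≤ s := hm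
      match m, hms with
      | 0, _ =>
        have h0 : {ω | T ((i : ℕ) + 1) ω = 0} = ∅ := by
          ext ω
          simp only [Set.mem_setOf_eq, Set.mem_empty_iff_false, iff_false]
          rw [hTS _ (by omega) ω]
          omega
        rw [h0]
        simp only [Set.empty_inter]
        exact @MeasurableSet.empty _ (𝒢 s)
      | (m' + 1), hms =>
        refine MeasurableSet.inter (MeasurableSet.inter ?_ ?_) (Stmt4Aux.st_le (hS (n + 1) (by omega)) s)
        · have h1 : {ω | T ((i : ℕ) + 1) ω = m' + 1} = {ω | S ((i : ℕ) + 1) ω = m'} := by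
            ext ω
            rw [Set.mem_setOf_eq, Set.mem_setOf_eq, hTS _ (by omega) ω]
            omega
          rw [h1]
          exact 𝒢.mono (by omega) _ (Stmt4Aux.st_eq (hS ((i : ℕ) + 1) (by omega)) m')
        · have hcle : MeasurableSpace.comap (Z (m' + 1)) inferInstance ≤ 𝒢 s := by
            rw [h𝒢 s]
            exact le_iSup₂ (f := fun i _ => MeasurableSpace.comap (Z i) inferInstance)
              (m' + 1) ⟨by omega, hms⟩
          exact hcle _ (MeasurableSpace.measurableSet_comap.mpr
            ⟨B i.castSucc, hB i.castSucc, rfl⟩)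
    have hmain := Stmt4Aux.unbounded μ Z hZ hcid 𝒢 h𝒢 (hS (n + 1) (by omega))
      (hS (n + 2) (by omega)) hσσ' hA𝒢 (hB (Fin.last n))
    have e2 : {ω | Z (T (n + 2) ω) ω ∈ B (Fin.last n)}
        = {ω | Z (S (n + 2) ω + 1) ω ∈ B (Fin.last n)} := by
      ext ω
      rw [Set.mem_setOf_eq, Set.mem_setOf_eq, hTS (n + 2) (by omega) ω]
    have e1 : {ω | Z (T (n + 1) ω) ω ∈ B (Fin.last n)}
        = {ω | Z (S (n + 1) ω + 1) ω ∈ B (Fin.last n)} := by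
      ext ω
      rw [Set.mem_setOf_eq, Set.mem_setOf_eq, hTS (n + 1) (by omega) ω]
    rw [e2, e1]
    exact hmain
  · rw [Measure.map_apply hF2 MeasurableSet.univ, Measure.map_apply hF1 MeasurableSet.univ]
    simp
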